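/- The number of magic labellings of the cube with magic sum r equals the coefficient of y^r in (1+3y+3y^2+y^3)/(1−y)^6; equivalently it is a polynomial in r of degree 5. -/
import Mathlib

open Finset PowerSeries

def IsMagic (x : Fin 12 → ℕ) (r : ℕ) : Prop :=
  x 0 + x 1 + x 8 = r ∧ x 0 + x 2 + x 9 = r ∧
  x 1 + x 3 + x 11 = r ∧ x 2 + x 3 + x 10 = r ∧
  x 4 + x 5 + x 8 = r ∧ x 4 + x 6 + x 9 = r ∧
  x 5 + x 7 + x 11 = r ∧ x 6 + x 7 + x 10 = r

/-- The number of magic labellings of the cube with magic sum `r`. -/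
noncomputable def magicCount (r : ℕ) : ℕ := Nat.card {x : Fin 12 → ℕ // IsMagic x r}

/-- The generating function `G(y) = Σ_r magicCount r · y^r`. -/
noncomputable def G : PowerSeries ℚ := PowerSeries.mk fun r => (magicCount r : ℚ)

def T (r : ℕ) : Finset (ℕ × ℕ × ℕ × ℕ × ℕ) :=
  (range (r+1) ×ˢ range (r+1) ×ˢ range (r+1) ×ˢ range (r+1) ×ˢ range (r+1)).filter
    fun v => v.2.2.1 + v.1 ≤ r ∧ v.2.2.1 + v.2.1 ≤ r ∧ v.1 + v.2.2.2.1 ≤ r ∧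
      v.2.1 + v.2.2.2.1 ≤ r ∧ v.1 ≤ v.2.1 + v.2.2.2.2 ∧ v.2.2.2.2 ≤ v.2.2.1 + v.1 ∧
      v.2.2.2.2 ≤ v.1 + v.2.2.2.1

lemma mem_T (r b c a d e : ℕ) :
    (b, c, a, d, e) ∈ T r ↔ (a + b ≤ r ∧ a + c ≤ r ∧ b + d ≤ r ∧
      c + d ≤ r ∧ b ≤ c + e ∧ e ≤ a + b ∧ e ≤ b + d) := by
  simp only [T, mem_filter, mem_product, mem_range]
  omega

def toX (r : ℕ) (v : ℕ × ℕ × ℕ × ℕ × ℕ) : Fin 12 → ℕ := fun i =>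
  match i.val with
  | 0 => v.2.2.1
  | 1 => v.1
  | 2 => v.2.1
  | 3 => v.2.2.2.1
  | 4 => v.2.2.1 + v.1 - v.2.2.2.2
  | 5 => v.2.2.2.2
  | 6 => v.2.1 + v.2.2.2.2 - v.1
  | 7 => v.1 + v.2.2.2.1 - v.2.2.2.2
  | 8 => r - v.2.2.1 - v.1
  | 9 => r - v.2.2.1 - v.2.1
  | 10 => r - v.2.1 - v.2.2.2.1
  | _ => r - v.1 - v.2.2.2.1

lemma toX_apply (r b c a d e : ℕ) :
    toX r (b, c, a, d, e) 0 = a ∧ toX r (b, c, a, d, e) 1 = b ∧ toX r (b, c, a, d, e) 2 = c ∧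
    toX r (b, c, a, d, e) 3 = d ∧ toX r (b, c, a, d, e) 4 = a + b - e ∧
    toX r (b, c, a, d, e) 5 = e ∧ toX r (b, c, a, d, e) 6 = c + e - b ∧
    toX r (b, c, a, d, e) 7 = b + d - e ∧ toX r (b, c, a, d, e) 8 = r - a - b ∧
    toX r (b, c, a, d, e) 9 = r - a - c ∧ toX r (b, c, a, d, e) 10 = r - c - d ∧
    toX r (b, c, a, d, e) 11 = r - b - d :=
  ⟨rfl, rfl, rfl, rfl, rfl, rfl, rfl, rfl, rfl, rfl, rfl, rfl⟩

lemma isMagic_toX (r b c a d e : ℕ) (hv : (b, c, a, d, e) ∈ T r) :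
    IsMagic (toX r (b, c, a, d, e)) r := by
  rw [mem_T] at hv
  obtain ⟨e0, e1, e2, e3, e4, e5, e6, e7, e8, e9, e10, e11⟩ := toX_apply r b c a d e
  refine ⟨?_, ?_, ?_, ?_, ?_, ?_, ?_, ?_⟩ <;> omega

lemma fromX_mem (r : ℕ) (x : Fin 12 → ℕ) (hx : IsMagic x r) :
    (x 1, x 2, x 0, x 3, x 5) ∈ T r := by
  obtain ⟨h1, h2, h3, h4, h5, h6, h7, h8⟩ := hx
  rw [mem_T]
  omega

lemma toX_fromX (r : ℕ) (x : Fin 12 → ℕ) (hx : IsMagic x r) :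
    toX r (x 1, x 2, x 0, x 3, x 5) = x := by
  obtain ⟨h1, h2, h3, h4, h5, h6, h7, h8⟩ := hx
  obtain ⟨e0, e1, e2, e3, e4, e5, e6, e7, e8, e9, e10, e11⟩ :=
    toX_apply r (x 1) (x 2) (x 0) (x 3) (x 5)
  funext i
  have hi : i = 0 ∨ i = 1 ∨ i = 2 ∨ i = 3 ∨ i = 4 ∨ i = 5 ∨ i = 6 ∨ i = 7 ∨ i = 8 ∨
      i = 9 ∨ i = 10 ∨ i = 11 := by revert i; decide
  rcases hi with rfl|rfl|rfl|rfl|rfl|rfl|rfl|rfl|rfl|rfl|rfl|rfl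
  · refine e0.trans ?_
    clear e0 e1 e2 e3 e4 e5 e6 e7 e8 e9 e10 e11
    omega
  · refine e1.trans ?_
    clear e0 e1 e2 e3 e4 e5 e6 e7 e8 e9 e10 e11
    omega
  · refine e2.trans ?_
    clear e0 e1 e2 e3 e4 e5 e6 e7 e8 e9 e10 e11
    omega
  · refine e3.trans ?_
    clear e0 e1 e2 e3 e4 e5 e6 e7 e8 e9 e10 e11
    omega
  · refine e4.trans ?_
    clear e0 e1 e2 e3 e4 e5 e6 e7 e8 e9 e10 e11
    omega
  · refine e5.trans ?_
    clear e0 e1 e2 e3 e4 e5 e6 e7 e8 e9 e10 e11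
    omega
  · refine e6.trans ?_
    clear e0 e1 e2 e3 e4 e5 e6 e7 e8 e9 e10 e11
    omega
  · refine e7.trans ?_
    clear e0 e1 e2 e3 e4 e5 e6 e7 e8 e9 e10 e11
    omega
  · refine e8.trans ?_
    clear e0 e1 e2 e3 e4 e5 e6 e7 e8 e9 e10 e11
    omega
  · refine e9.trans ?_
    clear e0 e1 e2 e3 e4 e5 e6 e7 e8 e9 e10 e11
    omega
  · refine e10.trans ?_
    clear e0 e1 e2 e3 e4 e5 e6 e7 e8 e9 e10 e11
    omega
  · refine e11.trans ?_
    clear e0 e1 e2 e3 e4 e5 e6 e7 e8 e9 e10 e11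
    omega

def magicEquiv (r : ℕ) : {x : Fin 12 → ℕ // IsMagic x r} ≃ {v // v ∈ T r} where
  toFun x := ⟨(x.1 1, x.1 2, x.1 0, x.1 3, x.1 5), fromX_mem r x.1 x.2⟩
  invFun v := ⟨toX r v.1, by
    obtain ⟨⟨b, c, a, d, e⟩, hv⟩ := v
    exact isMagic_toX r b c a d e hv⟩
  left_inv x := Subtype.ext (toX_fromX r x.1 x.2)
  right_inv v := by
    obtain ⟨⟨b, c, a, d, e⟩, hv⟩ := v
    apply Subtype.ext
    obtain ⟨e0, e1, e2, e3, e4, e5, e6, e7, e8, e9, e10, e11⟩ := toX_apply r b c a d e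
    simp only [toX_fromX]
    exact Prod.ext e1 (Prod.ext e2 (Prod.ext e0 (Prod.ext e3 e5)))

lemma magicCount_eq_card (r : ℕ) : magicCount r = (T r).card := by
  rw [magicCount, Nat.card_congr (magicEquiv r), Nat.card_eq_finsetCard]

def s2 (M : ℕ) : ℕ := ∑ i ∈ range (M+1), i^2

def Ncount (r : ℕ) : ℕ := ∑ m ∈ range (r+1), ((2*m+1) * s2 (r-m) + (m+1)^2 * (r-m+1)^2)

lemma sum_ite_le (f : ℕ → ℕ) (M n : ℕ) (h : M < n) :
    ∑ x ∈ range n, (if x ≤ M then f x else 0) = ∑ x ∈ range (M+1), f x := by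
  rw [← Finset.sum_filter]
  congr 1
  ext x
  simp only [mem_filter, mem_range]
  omega

lemma maxmin_group (φ : ℕ → ℕ → ℕ) (n : ℕ) :
    ∑ b ∈ range n, ∑ c ∈ range n, φ (max b c) (min b c)
      = ∑ m ∈ range n, (2 * ∑ k ∈ range m, φ m k + φ m m) := by
  induction n with
  | zero => simp
  | succ n ih =>
    rw [Finset.sum_range_succ]
    have h1 : ∀ b ∈ range n, ∑ c ∈ range (n+1), φ (max b c) (min b c)
        = (∑ c ∈ range n, φ (max b c) (min b c)) + φ n b := by
      intro b hb
      rw [Finset.sum_range_succ, max_eq_right (le_of_lt (mem_range.mp hb)),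
        min_eq_left (le_of_lt (mem_range.mp hb))]
    have h2 : ∑ c ∈ range (n+1), φ (max n c) (min n c)
        = (∑ c ∈ range n, φ n c) + φ n n := by
      rw [Finset.sum_range_succ, max_self, min_self]
      congr 1
      refine Finset.sum_congr rfl fun c hc => ?_
      rw [max_eq_left (le_of_lt (mem_range.mp hc)), min_eq_right (le_of_lt (mem_range.mp hc))]
    rw [Finset.sum_congr rfl h1, Finset.sum_add_distrib, ih, h2, Finset.sum_range_succ]
    have h3 : ∑ b ∈ range n, φ n b = ∑ c ∈ range n, φ n c := rfl
    omega

lemma gauss2 (m : ℕ) : 2 * ∑ k ∈ range m, (k+1) = m * (m+1) := by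
  induction m with
  | zero => simp
  | succ m ih => rw [Finset.sum_range_succ, Nat.mul_add, ih]; ring

lemma minsum (n : ℕ) : ∑ b ∈ range n, ∑ c ∈ range n, min b c = ∑ m ∈ range n, m^2 := by
  rw [maxmin_group (fun _ k => k) n]
  refine Finset.sum_congr rfl fun m _ => ?_
  cases m with
  | zero => simp
  | succ j =>
    have h : (∑ k ∈ range (j+1), k) * 2 = (j+1) * j := by
      simpa using Finset.sum_range_id_mul_two (j+1)
    calc 2 * (∑ k ∈ range (j+1), k) + (j+1) = (∑ k ∈ range (j+1), k) * 2 + (j+1) := by ring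
    _ = (j+1) * j + (j+1) := by rw [h]
    _ = (j+1)^2 := by ring

lemma sum_e (r b c a d : ℕ) :
    (∑ e ∈ range (r+1), if a+b ≤ r ∧ a+c ≤ r ∧ b+d ≤ r ∧ c+d ≤ r ∧ b ≤ c+e ∧ e ≤ a+b ∧ e ≤ b+d
        then 1 else 0)
      = if a+b ≤ r ∧ a+c ≤ r ∧ b+d ≤ r ∧ c+d ≤ r then min a d + min b c + 1 else 0 := by
  by_cases h : a+b ≤ r ∧ a+c ≤ r ∧ b+d ≤ r ∧ c+d ≤ r
  · rw [if_pos h]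
    obtain ⟨h1, h2, h3, h4⟩ := h
    have step : ∀ e ∈ range (r+1),
        (if a+b ≤ r ∧ a+c ≤ r ∧ b+d ≤ r ∧ c+d ≤ r ∧ b ≤ c+e ∧ e ≤ a+b ∧ e ≤ b+d then 1 else 0)
          = if b - c ≤ e ∧ e ≤ b + min a d then (1:ℕ) else 0 := by
      intro e _
      refine if_congr ?_ rfl rfl
      omega
    rw [Finset.sum_congr rfl step, ← Finset.card_filter]
    have hIcc : (range (r+1)).filter (fun e => b - c ≤ e ∧ e ≤ b + min a d)
        = Icc (b - c) (b + min a d) := by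
      ext e
      simp only [mem_filter, mem_range, mem_Icc]
      omega
    rw [hIcc, Nat.card_Icc]
    omega
  · rw [if_neg h]
    refine Finset.sum_eq_zero fun e _ => ?_
    rw [if_neg]
    intro hc
    exact h ⟨hc.1, hc.2.1, hc.2.2.1, hc.2.2.2.1⟩

lemma sum_ad (r b c : ℕ) (hb : b ≤ r) (hc : c ≤ r) :
    (∑ a ∈ range (r+1), ∑ d ∈ range (r+1),
        if a+b ≤ r ∧ a+c ≤ r ∧ b+d ≤ r ∧ c+d ≤ r then min a d + min b c + 1 else 0)
      = s2 (r - max b c) + (min b c + 1) * (r - max b c + 1)^2 := by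
  set M := r - max b c with hM
  have hcond : ∀ a d : ℕ, (a+b ≤ r ∧ a+c ≤ r ∧ b+d ≤ r ∧ c+d ≤ r) ↔ (a ≤ M ∧ d ≤ M) := by
    intro a d; omega
  have inner : ∀ a : ℕ, (∑ d ∈ range (r+1),
      if a+b ≤ r ∧ a+c ≤ r ∧ b+d ≤ r ∧ c+d ≤ r then min a d + min b c + 1 else 0)
      = if a ≤ M then ∑ d ∈ range (M+1), (min a d + min b c + 1) else 0 := by
    intro a
    by_cases ha : a ≤ M
    · rw [if_pos ha, ← sum_ite_le (fun d => min a d + min b c + 1) M (r+1) (by omega)]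
      refine Finset.sum_congr rfl fun d _ => ?_
      refine if_congr ?_ rfl rfl
      rw [hcond a d]
      simp [ha]
    · rw [if_neg ha]
      refine Finset.sum_eq_zero fun d _ => ?_
      rw [if_neg]
      rw [hcond a d]
      simp [ha]
  rw [Finset.sum_congr rfl (fun a _ => inner a),
    sum_ite_le (fun a => ∑ d ∈ range (M+1), (min a d + min b c + 1)) M (r+1) (by omega)]
  have expand : ∀ a ∈ range (M+1), (∑ d ∈ range (M+1), (min a d + min b c + 1))
      = (∑ d ∈ range (M+1), min a d) + (M+1) * (min b c + 1) := by
    intro a _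
    rw [Finset.sum_add_distrib, Finset.sum_add_distrib, Finset.sum_const, Finset.sum_const,
      card_range, smul_eq_mul, smul_eq_mul]
    ring
  rw [Finset.sum_congr rfl expand, Finset.sum_add_distrib, minsum (M+1), Finset.sum_const,
    card_range, smul_eq_mul]
  have : s2 M = ∑ m ∈ range (M+1), m^2 := rfl
  rw [← this]
  ring

lemma card_T (r : ℕ) : (T r).card = Ncount r := by
  have stage0 : (T r).card = ∑ b ∈ range (r+1), ∑ c ∈ range (r+1), ∑ a ∈ range (r+1),
      ∑ d ∈ range (r+1), ∑ e ∈ range (r+1),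
        if a+b ≤ r ∧ a+c ≤ r ∧ b+d ≤ r ∧ c+d ≤ r ∧ b ≤ c+e ∧ e ≤ a+b ∧ e ≤ b+d
          then 1 else 0 := by
    rw [T, Finset.card_filter]
    simp only [Finset.sum_product]
  rw [stage0]
  rw [Finset.sum_congr rfl fun b _ => Finset.sum_congr rfl fun c _ =>
    Finset.sum_congr rfl fun a _ => Finset.sum_congr rfl fun d _ => sum_e r b c a d]
  rw [Finset.sum_congr rfl fun b hb => Finset.sum_congr rfl fun c hc =>
    sum_ad r b c (Nat.lt_succ_iff.mp (mem_range.mp hb)) (Nat.lt_succ_iff.mp (mem_range.mp hc))]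
  rw [maxmin_group (fun m k => s2 (r - m) + (k + 1) * (r - m + 1)^2) (r+1)]
  refine Finset.sum_congr rfl fun m _ => ?_
  rw [Finset.sum_add_distrib, Finset.sum_const, card_range, smul_eq_mul, ← Finset.sum_mul]
  have g := gauss2 m
  calc 2 * (m * s2 (r - m) + (∑ k ∈ range m, (k+1)) * (r - m + 1)^2)
      + (s2 (r - m) + (m + 1) * (r - m + 1)^2)
      = (2*m+1) * s2 (r - m) + (2 * ∑ k ∈ range m, (k+1)) * (r - m + 1)^2
        + (m + 1) * (r - m + 1)^2 := by ring
    _ = (2*m+1) * s2 (r - m) + (m * (m+1)) * (r - m + 1)^2 + (m + 1) * (r - m + 1)^2 := by rw [g]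
    _ = (2*m+1) * s2 (r - m) + (m+1)^2 * (r - m + 1)^2 := by ring

lemma s2_nat (M : ℕ) : 6 * s2 M = M * (M+1) * (2*M+1) := by
  induction M with
  | zero => rfl
  | succ M ih =>
    have h : s2 (M+1) = s2 M + (M+1)^2 := Finset.sum_range_succ _ _
    rw [h, Nat.mul_add, ih]
    ring

lemma s2_cast (M : ℕ) : (s2 M : ℚ) = (M * (M+1) * (2*M+1)) / 6 := by
  have := s2_nat M
  have h6 : ((6 * s2 M : ℕ) : ℚ) = ((M * (M+1) * (2*M+1) : ℕ) : ℚ) := by rw [this]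
  push_cast at h6
  linarith

lemma pow1 (n : ℕ) : ∑ m ∈ range n, (m:ℚ) = n*(n-1)/2 := by
  induction n with
  | zero => simp
  | succ n ih => rw [Finset.sum_range_succ, ih]; push_cast; ring

lemma pow2 (n : ℕ) : ∑ m ∈ range n, (m:ℚ)^2 = n*(n-1)*(2*n-1)/6 := by
  induction n with
  | zero => simp
  | succ n ih => rw [Finset.sum_range_succ, ih]; push_cast; ring

lemma pow3 (n : ℕ) : ∑ m ∈ range n, (m:ℚ)^3 = n^2*(n-1)^2/4 := by
  induction n with
  | zero => simp
  | succ n ih => rw [Finset.sum_range_succ, ih]; push_cast; ring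

lemma pow4 (n : ℕ) : ∑ m ∈ range n, (m:ℚ)^4 = n*(n-1)*(2*n-1)*(3*n^2-3*n-1)/30 := by
  induction n with
  | zero => simp
  | succ n ih => rw [Finset.sum_range_succ, ih]; push_cast; ring

lemma Ncount_cast (r : ℕ) : (Ncount r : ℚ)
    = 1 + 83/30*r + 3*r^2 + 5/3*r^3 + 1/2*r^4 + 1/15*r^5 := by
  have key : ∀ m ∈ range (r+1),
      (((2*m+1) * s2 (r-m) + (m+1)^2 * (r-m+1)^2 : ℕ) : ℚ)
        = (1 + 13/6*r + 3/2*(r:ℚ)^2 + 1/3*r^3)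
          + (-1/6 + 4/3*r + 2*(r:ℚ)^2 + 2/3*r^3) * m
          + (-11/6 - 3*r - (r:ℚ)^2) * m^2 + (2/3) * m^3 + (1/3) * m^4 := by
    intro m hm
    have hm' : m ≤ r := Nat.lt_succ_iff.mp (mem_range.mp hm)
    have hsub : ((r - m : ℕ) : ℚ) = (r:ℚ) - m := by
      push_cast [Nat.cast_sub hm']
      ring
    push_cast [s2_cast]
    rw [hsub]
    ring
  rw [Ncount, Nat.cast_sum, Finset.sum_congr rfl key]
  rw [Finset.sum_add_distrib, Finset.sum_add_distrib, Finset.sum_add_distrib,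
    Finset.sum_add_distrib, ← Finset.mul_sum, ← Finset.mul_sum, ← Finset.mul_sum,
    ← Finset.mul_sum, Finset.sum_const, card_range, pow1, pow2, pow3, pow4]
  push_cast
  ring

lemma ch2 (n : ℕ) : 2 * (n+2).choose 2 = (n+1) * (n+2) := by
  induction n with
  | zero => decide
  | succ n ih =>
    rw [show n+1+2 = (n+2)+1 from rfl, Nat.choose_succ_succ (n+2) 1, Nat.mul_add, ih,
      Nat.choose_one_right]
    ring

lemma ch3 (n : ℕ) : 6 * (n+3).choose 3 = (n+1) * (n+2) * (n+3) := by
  induction n with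
  | zero => decide
  | succ n ih =>
    rw [show n+1+3 = (n+3)+1 from rfl, Nat.choose_succ_succ (n+3) 2, Nat.mul_add, ih]
    have h := ch2 (n+1)
    have : 6 * (n+3).choose 2 = 3 * (2 * (n+1+2).choose 2) := by ring_nf
    rw [this, h]
    ring_nf

lemma ch4 (n : ℕ) : 24 * (n+4).choose 4 = (n+1) * (n+2) * (n+3) * (n+4) := by
  induction n with
  | zero => decide
  | succ n ih =>
    rw [show n+1+4 = (n+4)+1 from rfl, Nat.choose_succ_succ (n+4) 3, Nat.mul_add, ih]
    have h := ch3 (n+1)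
    have : 24 * (n+4).choose 3 = 4 * (6 * (n+1+3).choose 3) := by ring_nf
    rw [this, h]
    ring_nf

lemma ch5 (n : ℕ) : 120 * (n+5).choose 5 = (n+1) * (n+2) * (n+3) * (n+4) * (n+5) := by
  induction n with
  | zero => decide
  | succ n ih =>
    rw [show n+1+5 = (n+5)+1 from rfl, Nat.choose_succ_succ (n+5) 4, Nat.mul_add, ih]
    have h := ch4 (n+1)
    have : 120 * (n+5).choose 4 = 5 * (24 * (n+1+4).choose 4) := by ring_nf
    rw [this, h]
    ring_nf

lemma q5 (n : ℕ) : ((n+5).choose 5 : ℚ) = (n+1)*(n+2)*(n+3)*(n+4)*(n+5)/120 := by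
  have h := ch5 n
  have : ((120 * (n+5).choose 5 : ℕ) : ℚ) = (((n+1)*(n+2)*(n+3)*(n+4)*(n+5) : ℕ) : ℚ) := by
    rw [h]
  push_cast at this
  linarith

lemma q5' (n : ℕ) : ((n+4).choose 5 : ℚ) = n*(n+1)*(n+2)*(n+3)*(n+4)/120 := by
  cases n with
  | zero => simp [Nat.choose]
  | succ m => rw [show m+1+4 = m+5 from rfl, q5 m]; push_cast; ring

lemma q5'' (n : ℕ) : ((n+3).choose 5 : ℚ) = ((n:ℚ)-1)*n*(n+1)*(n+2)*(n+3)/120 := by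
  cases n with
  | zero => simp [Nat.choose]
  | succ m => rw [show m+1+3 = m+4 from rfl, q5' m]; push_cast; ring

lemma q5''' (n : ℕ) : ((n+2).choose 5 : ℚ) = ((n:ℚ)-2)*((n:ℚ)-1)*n*(n+1)*(n+2)/120 := by
  cases n with
  | zero => norm_num [Nat.choose]
  | succ m => rw [show m+1+2 = m+3 from rfl, q5'' m]; push_cast; ring

lemma magicCount_eq_Ncount (r : ℕ) : magicCount r = Ncount r := by
  rw [magicCount_eq_card, card_T]

lemma magic_cast (r : ℕ) : (magicCount r : ℚ)
    = 1 + 83/30*r + 3*(r:ℚ)^2 + 5/3*(r:ℚ)^3 + 1/2*(r:ℚ)^4 + 1/15*(r:ℚ)^5 := by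
  rw [magicCount_eq_Ncount, Ncount_cast]

lemma keyChoose (r : ℕ) : (magicCount r : ℚ)
    = ((r+5).choose 5 : ℚ) + 3*((r+4).choose 5 : ℚ) + 3*((r+3).choose 5 : ℚ)
      + ((r+2).choose 5 : ℚ) := by
  rw [magic_cast, q5, q5', q5'', q5''']
  ring

lemma G_eq : G = (1 + 3 * X + 3 * X^2 + X^3 : PowerSeries ℚ) * (invOneSubPow ℚ 6).val := by
  have hval : ((invOneSubPow ℚ 6).val : PowerSeries ℚ)
      = PowerSeries.mk fun n => ((5+n).choose 5 : ℚ) := by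
    rw [invOneSubPow_val_eq_mk_sub_one_add_choose_of_pos ℚ 6 (by norm_num)]
  rw [hval]
  have hexp : (1 + 3 * X + 3 * X^2 + X^3 : PowerSeries ℚ) * (PowerSeries.mk fun n => ((5+n).choose 5 : ℚ))
      = (PowerSeries.mk fun n => ((5+n).choose 5 : ℚ))
        + (X * (PowerSeries.mk fun n => ((5+n).choose 5 : ℚ)) + X * (PowerSeries.mk fun n => ((5+n).choose 5 : ℚ))
          + X * (PowerSeries.mk fun n => ((5+n).choose 5 : ℚ)))
        + (X * (X * (PowerSeries.mk fun n => ((5+n).choose 5 : ℚ)))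
          + X * (X * (PowerSeries.mk fun n => ((5+n).choose 5 : ℚ)))
          + X * (X * (PowerSeries.mk fun n => ((5+n).choose 5 : ℚ))))
        + X * (X * (X * (PowerSeries.mk fun n => ((5+n).choose 5 : ℚ)))) := by ring
  rw [hexp]
  ext n
  rw [G, coeff_mk]
  simp only [map_add]
  rcases n with _|n
  · simp only [coeff_zero_X_mul, coeff_mk]
    have : magicCount 0 = 1 := by rw [magicCount_eq_Ncount]; decide
    rw [this]
    norm_num
  rcases n with _|n
  · simp only [coeff_succ_X_mul, coeff_zero_X_mul, coeff_mk]
    have : magicCount 1 = 9 := by rw [magicCount_eq_Ncount]; decide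
    rw [this]
    norm_num [Nat.choose]
  rcases n with _|n
  · simp only [coeff_succ_X_mul, coeff_zero_X_mul, coeff_mk]
    have : magicCount 2 = 42 := by rw [magicCount_eq_Ncount]; decide
    rw [this]
    norm_num [Nat.choose]
  · simp only [coeff_succ_X_mul, coeff_zero_X_mul, coeff_mk]
    rw [keyChoose (n+3)]
    rw [show n+3+5 = 5+(n+1+1+1) from by omega, show n+3+4 = 5+(n+1+1) from by omega,
      show n+3+3 = 5+(n+1) from by omega, show n+3+2 = 5+n from by omega]
    ring

theorem magic_count_generating_function :
    G * (1 - PowerSeries.X) ^ 6 =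
      1 + 3 * PowerSeries.X + 3 * PowerSeries.X ^ 2 + PowerSeries.X ^ 3 ∧
    ∃ p : Polynomial ℚ, p.degree = 5 ∧ ∀ r : ℕ, (magicCount r : ℚ) = p.eval (r : ℚ) := by
  constructor
  · rw [G_eq, mul_assoc, ← invOneSubPow_inv_eq_one_sub_pow ℚ 6, (invOneSubPow ℚ 6).val_inv,
      mul_one]
  · refine ⟨Polynomial.C 1 + Polynomial.C (83/30) * Polynomial.X
      + Polynomial.C 3 * Polynomial.X^2 + Polynomial.C (5/3) * Polynomial.X^3
      + Polynomial.C (1/2) * Polynomial.X^4 + Polynomial.C (1/15) * Polynomial.X^5, ?_, ?_⟩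
    · compute_degree!
    · intro r
      rw [magic_cast]
      simp [Polynomial.eval_add, Polynomial.eval_mul, Polynomial.eval_pow]
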